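/- For v in the open unit ball of ℝⁿ, B(v)² = B(v ⊕ v), i.e., the square of the Lorentz boost of v is the Lorentz boost of the Einstein double of v. -/

import Mathlib

open scoped RealInnerProductSpace

noncomputable def gam {n : ℕ} (v : EuclideanSpace ℝ (Fin n)) : ℝ :=
  1 / Real.sqrt (1 - ‖v‖ ^ 2)

noncomputable def eAdd {n : ℕ} (u v : EuclideanSpace ℝ (Fin n)) :
    EuclideanSpace ℝ (Fin n) :=
  (1 / (1 + ⟪u, v⟫)) •
    (u + (1 / gam u) • v + ((gam u / (1 + gam u)) * ⟪u, v⟫) • u)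

noncomputable def boost {n : ℕ} (v : EuclideanSpace ℝ (Fin n)) :
    Matrix (Unit ⊕ Fin n) (Unit ⊕ Fin n) ℝ :=
  Matrix.fromBlocks
    (Matrix.of fun _ _ => gam v)
    (Matrix.of fun _ j => gam v * v j)
    (Matrix.of fun i _ => gam v * v i)
    (1 + Matrix.of fun i j => (gam v) ^ 2 / (1 + gam v) * v i * v j)

set_option maxHeartbeats 1000000 in
theorem boost_sq {n : ℕ} (v : EuclideanSpace ℝ (Fin n)) (hv : ‖v‖ < 1) :
    boost v ^ 2 = boost (eAdd v v) := by
  have hnorm : (0:ℝ) < 1 - ‖v‖^2 := by nlinarith [norm_nonneg v]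
  have hsum : ∑ k, v k * v k = ‖v‖^2 := by
    rw [← real_inner_self_eq_norm_sq]
    simp [PiLp.inner_apply, RCLike.inner_apply]
    rw [EuclideanSpace.norm_eq, Real.sq_sqrt (Finset.sum_nonneg (fun i _ => by positivity))]
    exact Finset.sum_congr rfl (fun i _ => by rw [Real.norm_eq_abs, sq_abs, sq])
  set s := ‖v‖^2 with hs
  have hspos : 0 ≤ s := by positivity
  have hsqrt : 0 < Real.sqrt (1-s) := Real.sqrt_pos.2 hnorm
  have hgdef : gam v = 1 / Real.sqrt (1 - s) := rfl
  have hgpos : 0 < gam v := by rw [hgdef]; positivity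
  set g := gam v with hgd
  have hg2 : g^2 * (1-s) = 1 := by rw [hgdef]; field_simp; rw [Real.sq_sqrt hnorm.le]
  have hg1 : 1 ≤ g := by nlinarith
  have h2g : (0:ℝ) < 2*g^2 - 1 := by nlinarith
  have hne : (2*g^2-1) ≠ 0 := ne_of_gt h2g
  have hgne : g ≠ 0 := ne_of_gt hgpos
  have h1gne : (1:ℝ)+g ≠ 0 := by positivity
  have hw : eAdd v v = ((2*g^2)/(2*g^2-1)) • v := by
    unfold eAdd
    rw [real_inner_self_eq_norm_sq, ← hs, ← hgd,
      show v + (1/g) • v + (g/(1+g)*s) • v = ((1 + 1/g + g/(1+g)*s)) • v by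
        rw [add_smul, add_smul, one_smul], smul_smul]
    congr 1
    have h1 : (1:ℝ)+s > 0 := by linarith
    have h1g : (1:ℝ)+g > 0 := by linarith
    have h1ne : (1:ℝ)+s ≠ 0 := by positivity
    rw [div_mul_eq_mul_div, one_mul, div_eq_div_iff h1ne hne]
    field_simp
    ring_nf
    linear_combination (1+2*g)*hg2
  set c := (2*g^2)/(2*g^2-1) with hcd
  have hcpos : 0 < c := by positivity
  have hwnorm : 1 - ‖eAdd v v‖^2 = (1/(2*g^2-1))^2 := by
    rw [hw, norm_smul, mul_pow, Real.norm_eq_abs, sq_abs, ← hs]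
    have hs2 : s = (g^2-1)/g^2 := by field_simp; nlinarith [hg2]
    rw [hcd, hs2]; field_simp; ring
  have hgam2 : gam (eAdd v v) = 2*g^2 - 1 := by
    rw [gam, hwnorm, show ((1/(2*g^2-1))^2 : ℝ) = (1/(2*g^2-1))*(1/(2*g^2-1)) by ring,
      Real.sqrt_mul_self (by positivity)]
    field_simp
  have hwj : ∀ j, eAdd v v j = c * v j := by
    intro j; rw [hw]; simp [hcd]
  have key : ∀ a : ℝ, (∑ k, a * (v k * v k)) = a * s := fun a => by
    rw [← Finset.mul_sum, hsum]
  have h2gne : (1:ℝ) + (2*g^2-1) ≠ 0 := by nlinarith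
  have hs2 : s = (g^2-1)/g^2 := by field_simp; nlinarith [hg2]
  have hA : g*g + (g*g)*s = 2*g^2-1 := by linear_combination -hg2
  have hB : g*g + g + (g*(g^2/(1+g)))*s = (2*g^2-1)*c := by
    rw [hcd, hs2]; field_simp
    rw [mul_div_cancel_right₀ _ (by rwa [mul_comm] at hne : g^2*2-1 ≠ 0)]; ring
  have hD : g*g + (2*(g^2/(1+g)) + ((g^2/(1+g))*(g^2/(1+g)))*s)
      = (2*g^2-1)^2/(1+(2*g^2-1)) * (c*c) := by
    rw [hcd, hs2]; field_simp
    rw [mul_div_cancel_right₀ _ (by rwa [mul_comm] at hne : g^2*2-1 ≠ 0)]; ring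
  rw [pow_two]
  ext i j
  rcases i with i | i <;> rcases j with j | j <;>
    simp only [Matrix.mul_apply, boost, Fintype.sum_sum_type,
      Matrix.fromBlocks_apply₁₁, Matrix.fromBlocks_apply₁₂,
      Matrix.fromBlocks_apply₂₁, Matrix.fromBlocks_apply₂₂,
      Matrix.of_apply, Matrix.add_apply, Matrix.one_apply, hgam2, hwj, ← hgd]
  · rw [Finset.sum_congr rfl (fun k _ => show g * v k * (g * v k)
        = (g*g) * (v k * v k) from by ring), key]
    simpa using hA
  · rw [Finset.sum_congr rfl (fun k _ =>
      show g * v k * ((if k = j then 1 else 0) + g^2/(1+g) * v k * v j)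
        = (if k = j then g * v j else 0) + (g*(g^2/(1+g))*v j) * (v k * v k) from by
          by_cases h : k = j
          · subst h; simp only [eq_self_iff_true, if_true]; ring
          · simp only [if_neg h]; ring)]
    rw [Finset.sum_add_distrib, key]
    simp only [Finset.sum_ite_eq', Finset.mem_univ, if_true,
      Finset.univ_unique, Finset.sum_singleton]
    linear_combination (v j) * hB
  · rw [Finset.sum_congr rfl (fun k _ =>
      show ((if i = k then 1 else 0) + g^2/(1+g) * v i * v k) * (g * v k)
        = (if i = k then g * v i else 0) + (g*(g^2/(1+g))*v i) * (v k * v k) from by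
          by_cases h : i = k
          · subst h; simp only [eq_self_iff_true, if_true]; ring
          · simp only [if_neg h]; ring)]
    rw [Finset.sum_add_distrib, key]
    simp only [Finset.sum_ite_eq, Finset.mem_univ, if_true,
      Finset.univ_unique, Finset.sum_singleton]
    linear_combination (v i) * hB
  · rw [Finset.sum_congr rfl (fun k _ =>
      show ((if i = k then 1 else 0) + g^2/(1+g) * v i * v k)
          * ((if k = j then 1 else 0) + g^2/(1+g) * v k * v j)
        = ((if i = k then (if k = j then (1:ℝ) else 0) else 0)
          + ((if k = j then g^2/(1+g) * v i * v j else 0)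
          + ((if i = k then g^2/(1+g) * v i * v j else 0)
          + ((g^2/(1+g))*(g^2/(1+g))*v i*v j) * (v k * v k)))) from by
          by_cases h1 : i = k
          · subst h1
            by_cases h2 : i = j
            · subst h2; simp only [eq_self_iff_true, if_true]; ring
            · simp only [eq_self_iff_true, if_true, if_neg h2]; ring
          · by_cases h2 : k = j
            · subst h2; simp only [if_neg h1, eq_self_iff_true, if_true]; ring
            · simp only [if_neg h1, if_neg h2]; ring)]
    rw [Finset.sum_add_distrib, Finset.sum_add_distrib, Finset.sum_add_distrib, key]
    simp only [Finset.sum_ite_eq, Finset.sum_ite_eq', Finset.mem_univ, if_true,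
      Finset.univ_unique, Finset.sum_singleton]
    linear_combination (v i * v j) * hD
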